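/- Let a, b be real numbers with a ≠ b and define h₂(t) = (t^a + 1)/(t^b + 1) on (0,∞). If b > 0 ≥ a, then h₂ is not operator monotone on (0,∞). -/

import Mathlib

set_option maxHeartbeats 1000000

/-- The open upper half-plane. -/
def UHP : Set ℂ := {z : ℂ | 0 < z.im}

/-- By Löwner's theorem, a (continuous) function on `(0,∞)` is operator monotone
iff it extends to a Pick function: a holomorphic map of the upper half-plane into
its closure, with boundary values `f` on `(0,∞)`. We take this as the definition. -/
def OperatorMonotoneOn (f : ℝ → ℝ) : Prop :=
  ∃ F : ℂ → ℂ, DifferentiableOn ℂ F UHP ∧ (∀ z ∈ UHP, 0 ≤ (F z).im) ∧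
    ∀ t : ℝ, 0 < t → Filter.Tendsto F (nhdsWithin (t : ℂ) UHP) (nhds ((f t : ℂ)))

open Complex Set Filter MeasureTheory intervalIntegral Metric
open scoped Topology Interval

noncomputable section

lemma isOpen_UHP : IsOpen UHP := isOpen_lt continuous_const Complex.continuous_im

lemma log_neg_im_pos {z : ℂ} (h : 0 < z.im) : Complex.log (-z) = Complex.log z - Real.pi * I := by
  apply Complex.ext
  · simp [Complex.log_re]
  · simp [Complex.log_im, Complex.arg_neg_eq_arg_sub_pi_of_im_pos h]

lemma log_neg_im_neg {z : ℂ} (h : z.im < 0) : Complex.log (-z) = Complex.log z + Real.pi * I := by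
  apply Complex.ext
  · simp [Complex.log_re]
  · simp [Complex.log_im, Complex.arg_neg_eq_arg_add_pi_of_im_neg h]

lemma cont_inv_horiz (c : ℝ) (w : ℂ) (hc : c ≠ w.im) :
    Continuous (fun x : ℝ => ((x : ℂ) + c * I - w)⁻¹) := by
  apply Continuous.inv₀
  · continuity
  · intro x h
    have : ((x : ℂ) + c * I - w).im = c - w.im := by simp
    rw [h] at this
    simp at this
    exact hc (by linarith)

lemma integral_horiz_inv (a b c : ℝ) (w : ℂ) (hc : c ≠ w.im) :
    (∫ x in a..b, ((x : ℂ) + c * I - w)⁻¹) =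
      Complex.log ((b : ℂ) + c * I - w) - Complex.log ((a : ℂ) + c * I - w) := by
  apply intervalIntegral.integral_eq_sub_of_hasDerivAt
  · intro x _
    have hmem : ((x : ℂ) + c * I - w) ∈ Complex.slitPlane := by
      rw [Complex.mem_slitPlane_iff]
      right
      simp only [Complex.sub_im, Complex.add_im, Complex.ofReal_im, Complex.mul_im,
        Complex.ofReal_re, Complex.I_im, Complex.I_re, Complex.ofReal_im]
      intro h
      exact hc (by linarith [sub_eq_zero.mp h])
    have h1 : HasDerivAt (fun z : ℂ => Complex.log (z + c * I - w))
        (((x : ℂ) + c * I - w)⁻¹) (x : ℂ) := by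
      have hin : HasDerivAt (fun z : ℂ => z + c * I - w) 1 (x : ℂ) :=
        ((hasDerivAt_id _).add_const _).sub_const _
      simpa using! ((Complex.hasStrictDerivAt_log hmem).hasDerivAt).comp (x : ℂ) hin
    exact h1.comp_ofReal
  · exact ((cont_inv_horiz c w hc)).intervalIntegrable _ _

lemma cont_inv_vert (e : ℝ) (w : ℂ) (he : e ≠ w.re) :
    Continuous (fun y : ℝ => ((e : ℂ) + y * I - w)⁻¹) := by
  apply Continuous.inv₀
  · continuity
  · intro y h
    have : ((e : ℂ) + y * I - w).re = e - w.re := by simp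
    rw [h] at this
    simp at this
    exact he (by linarith)

lemma integral_vert_right (c d e : ℝ) (w : ℂ) (he : w.re < e) :
    I • (∫ y in c..d, ((e : ℂ) + y * I - w)⁻¹) =
      Complex.log ((e : ℂ) + d * I - w) - Complex.log ((e : ℂ) + c * I - w) := by
  have h : (∫ y in c..d, I * ((e : ℂ) + y * I - w)⁻¹) =
      Complex.log ((e : ℂ) + d * I - w) - Complex.log ((e : ℂ) + c * I - w) := by
    apply intervalIntegral.integral_eq_sub_of_hasDerivAt
    · intro y _
      have hmem : ((e : ℂ) + y * I - w) ∈ Complex.slitPlane := by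
        rw [Complex.mem_slitPlane_iff]
        left
        simp
        linarith
      have hin : HasDerivAt (fun z : ℂ => (e : ℂ) + z * I - w) I (y : ℂ) := by
        simpa using (((hasDerivAt_id ((y : ℝ) : ℂ)).mul_const I).const_add (e : ℂ)).sub_const w
      have h1 : HasDerivAt (fun z : ℂ => Complex.log ((e : ℂ) + z * I - w))
          (((e : ℂ) + y * I - w)⁻¹ * I) (y : ℂ) := by
        have := ((Complex.hasStrictDerivAt_log hmem).hasDerivAt).comp (y : ℂ) hin; exact this
      have := h1.comp_ofReal
      simpa [mul_comm] using this
    · exact ((continuous_const.mul (cont_inv_vert e w (ne_of_gt he)))).intervalIntegrable _ _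
  rw [← h, intervalIntegral.integral_const_mul, smul_eq_mul]

lemma integral_vert_left (c d e : ℝ) (w : ℂ) (he : e < w.re) :
    I • (∫ y in c..d, ((e : ℂ) + y * I - w)⁻¹) =
      Complex.log (-((e : ℂ) + d * I - w)) - Complex.log (-((e : ℂ) + c * I - w)) := by
  have h : (∫ y in c..d, I * ((e : ℂ) + y * I - w)⁻¹) =
      Complex.log (-((e : ℂ) + d * I - w)) - Complex.log (-((e : ℂ) + c * I - w)) := by
    apply intervalIntegral.integral_eq_sub_of_hasDerivAt
    · intro y _
      have hmem : (-((e : ℂ) + y * I - w)) ∈ Complex.slitPlane := by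
        rw [Complex.mem_slitPlane_iff]
        left
        simp
        linarith
      have hin : HasDerivAt (fun z : ℂ => -((e : ℂ) + z * I - w)) (-I) (y : ℂ) := by
        have := ((((hasDerivAt_id ((y : ℝ) : ℂ)).mul_const I).const_add (e : ℂ)).sub_const w).neg
        simp only [one_mul] at this
        exact this
      have h1 : HasDerivAt (fun z : ℂ => Complex.log (-((e : ℂ) + z * I - w)))
          ((-((e : ℂ) + y * I - w))⁻¹ * (-I)) (y : ℂ) := by
        have := ((Complex.hasStrictDerivAt_log hmem).hasDerivAt).comp (y : ℂ) hin; exact this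
      have := h1.comp_ofReal
      have heq : (-((e : ℂ) + y * I - w))⁻¹ * (-I) = I * ((e : ℂ) + y * I - w)⁻¹ := by
        rw [inv_neg]; ring
      rw [heq] at this
      exact this
    · exact ((continuous_const.mul (cont_inv_vert e w (ne_of_lt he)))).intervalIntegrable _ _
  rw [← h, intervalIntegral.integral_const_mul, smul_eq_mul]

/-- counterclockwise boundary integral over rectangle `[a,b] × [c,d]`. -/
def rectInt (h : ℂ → ℂ) (a b c d : ℝ) : ℂ :=
  ((∫ x in a..b, h ((x : ℂ) + c * I)) - (∫ x in a..b, h ((x : ℂ) + d * I))) +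
    I • (∫ y in c..d, h ((b : ℂ) + y * I)) - I • (∫ y in c..d, h ((a : ℂ) + y * I))

lemma rect_winding (a b c d : ℝ) (w : ℂ) (hw1 : a < w.re) (hw2 : w.re < b)
    (hw3 : c < w.im) (hw4 : w.im < d) :
    rectInt (fun z => (z - w)⁻¹) a b c d = 2 * Real.pi * I := by
  have him_d : (0 : ℝ) < ((a : ℂ) + d * I - w).im := by simp; linarith
  have him_c : ((a : ℂ) + c * I - w).im < 0 := by simp; linarith
  rw [rectInt, integral_horiz_inv a b c w (ne_of_lt hw3),
    integral_horiz_inv a b d w (ne_of_gt hw4),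
    integral_vert_right c d b w hw2, integral_vert_left c d a w hw1,
    log_neg_im_pos him_d, log_neg_im_neg him_c]
  ring

/-- the boundary frame of the rectangle -/
def rectBd (a b c d : ℝ) : Set ℂ := (Icc a b ×ℂ Icc c d) \ (Ioo a b ×ℂ Ioo c d)

lemma bottom_mem_rectBd {a b c d x : ℝ} (hab : a ≤ b) (hcd : c ≤ d) (hx : x ∈ uIcc a b) :
    (x : ℂ) + c * I ∈ rectBd a b c d := by
  rw [uIcc_of_le hab] at hx
  refine ⟨mem_reProdIm.2 ⟨by simpa using hx, by simp [mem_Icc, hcd]⟩, fun h => ?_⟩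
  have := (mem_reProdIm.1 h).2
  simp [mem_Ioo] at this

lemma top_mem_rectBd {a b c d x : ℝ} (hab : a ≤ b) (hcd : c ≤ d) (hx : x ∈ uIcc a b) :
    (x : ℂ) + d * I ∈ rectBd a b c d := by
  rw [uIcc_of_le hab] at hx
  refine ⟨mem_reProdIm.2 ⟨by simpa using hx, by simp [mem_Icc, hcd]⟩, fun h => ?_⟩
  have := (mem_reProdIm.1 h).2
  simp [mem_Ioo] at this

lemma right_mem_rectBd {a b c d y : ℝ} (hab : a ≤ b) (hcd : c ≤ d) (hy : y ∈ uIcc c d) :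
    (b : ℂ) + y * I ∈ rectBd a b c d := by
  rw [uIcc_of_le hcd] at hy
  refine ⟨mem_reProdIm.2 ⟨by simp [mem_Icc, hab], by simpa using hy⟩, fun h => ?_⟩
  have := (mem_reProdIm.1 h).1
  simp [mem_Ioo] at this

lemma left_mem_rectBd {a b c d y : ℝ} (hab : a ≤ b) (hcd : c ≤ d) (hy : y ∈ uIcc c d) :
    (a : ℂ) + y * I ∈ rectBd a b c d := by
  rw [uIcc_of_le hcd] at hy
  refine ⟨mem_reProdIm.2 ⟨by simp [mem_Icc, hab], by simpa using hy⟩, fun h => ?_⟩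
  have := (mem_reProdIm.1 h).1
  simp [mem_Ioo] at this

lemma rectInt_congr {h₁ h₂ : ℂ → ℂ} {a b c d : ℝ} (hab : a ≤ b) (hcd : c ≤ d)
    (H : EqOn h₁ h₂ (rectBd a b c d)) :
    rectInt h₁ a b c d = rectInt h₂ a b c d := by
  unfold rectInt
  rw [intervalIntegral.integral_congr (g := fun x : ℝ => h₂ ((x : ℂ) + c * I))
      (fun x hx => H (bottom_mem_rectBd hab hcd hx)),
    intervalIntegral.integral_congr (g := fun x : ℝ => h₂ ((x : ℂ) + d * I))
      (fun x hx => H (top_mem_rectBd hab hcd hx)),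
    intervalIntegral.integral_congr (g := fun y : ℝ => h₂ ((b : ℂ) + y * I))
      (fun y hy => H (right_mem_rectBd hab hcd hy)),
    intervalIntegral.integral_congr (g := fun y : ℝ => h₂ ((a : ℂ) + y * I))
      (fun y hy => H (left_mem_rectBd hab hcd hy))]

lemma rectInt_sub {h₁ h₂ : ℂ → ℂ} {a b c d : ℝ} (hab : a ≤ b) (hcd : c ≤ d)
    (H1 : ContinuousOn h₁ (rectBd a b c d)) (H2 : ContinuousOn h₂ (rectBd a b c d)) :
    rectInt (fun z => h₁ z - h₂ z) a b c d = rectInt h₁ a b c d - rectInt h₂ a b c d := by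
  have cont_bot : Continuous fun x : ℝ => ((x : ℂ) + c * I) := by continuity
  have cont_top : Continuous fun x : ℝ => ((x : ℂ) + d * I) := by continuity
  have cont_r : Continuous fun y : ℝ => ((b : ℂ) + y * I) := by continuity
  have cont_l : Continuous fun y : ℝ => ((a : ℂ) + y * I) := by continuity
  have i1 := (H1.comp cont_bot.continuousOn
    (fun x hx => bottom_mem_rectBd hab hcd hx)).intervalIntegrable (μ := volume) (a := a) (b := b)
  have i2 := (H2.comp cont_bot.continuousOn
    (fun x hx => bottom_mem_rectBd hab hcd hx)).intervalIntegrable (μ := volume) (a := a) (b := b)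
  have i3 := (H1.comp cont_top.continuousOn
    (fun x hx => top_mem_rectBd hab hcd hx)).intervalIntegrable (μ := volume) (a := a) (b := b)
  have i4 := (H2.comp cont_top.continuousOn
    (fun x hx => top_mem_rectBd hab hcd hx)).intervalIntegrable (μ := volume) (a := a) (b := b)
  have i5 := (H1.comp cont_r.continuousOn
    (fun y hy => right_mem_rectBd hab hcd hy)).intervalIntegrable (μ := volume) (a := c) (b := d)
  have i6 := (H2.comp cont_r.continuousOn
    (fun y hy => right_mem_rectBd hab hcd hy)).intervalIntegrable (μ := volume) (a := c) (b := d)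
  have i7 := (H1.comp cont_l.continuousOn
    (fun y hy => left_mem_rectBd hab hcd hy)).intervalIntegrable (μ := volume) (a := c) (b := d)
  have i8 := (H2.comp cont_l.continuousOn
    (fun y hy => left_mem_rectBd hab hcd hy)).intervalIntegrable (μ := volume) (a := c) (b := d)
  simp only [Function.comp_def] at i1 i2 i3 i4 i5 i6 i7 i8
  unfold rectInt
  rw [intervalIntegral.integral_sub i1 i2, intervalIntegral.integral_sub i3 i4,
    intervalIntegral.integral_sub i5 i6, intervalIntegral.integral_sub i7 i8]
  simp only [smul_sub]
  ring

lemma rectInt_mul_const {h : ℂ → ℂ} {k : ℂ} {a b c d : ℝ} :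
    rectInt (fun z => h z * k) a b c d = rectInt h a b c d * k := by
  unfold rectInt
  rw [intervalIntegral.integral_mul_const, intervalIntegral.integral_mul_const,
    intervalIntegral.integral_mul_const, intervalIntegral.integral_mul_const]
  simp only [smul_eq_mul]
  ring

lemma rect_goursat (g : ℂ → ℂ) {a b c d : ℝ} (hab : a ≤ b) (hcd : c ≤ d)
    (s : Set ℂ) (hs : s.Countable)
    (Hc : ContinuousOn g (Icc a b ×ℂ Icc c d))
    (Hd : ∀ z ∈ (Ioo a b ×ℂ Ioo c d) \ s, DifferentiableAt ℂ g z) :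
    rectInt g a b c d = 0 := by
  have := Complex.integral_boundary_rect_eq_zero_of_differentiable_on_off_countable g
    ((a : ℂ) + (c : ℂ) * I) ((b : ℂ) + (d : ℂ) * I) s hs ?_ ?_
  · simp only [Complex.add_re, Complex.ofReal_re, Complex.mul_re, Complex.ofReal_im,
      Complex.I_re, Complex.I_im, mul_zero, mul_one, zero_mul, sub_zero, add_zero, zero_sub,
      Complex.add_im, Complex.mul_im, zero_add, neg_zero, zero_mul, sub_self] at this
    -- now `this` should be exactly rectInt g a b c d = 0 modulo shape
    rw [rectInt]
    convert this using 2
  · simp only [Complex.add_re, Complex.ofReal_re, Complex.mul_re, Complex.ofReal_im,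
      Complex.I_re, Complex.I_im, mul_zero, mul_one, zero_mul, sub_zero, add_zero,
      Complex.add_im, Complex.mul_im, zero_add, zero_mul]
    rwa [uIcc_of_le hab, uIcc_of_le hcd]
  · simp only [Complex.add_re, Complex.ofReal_re, Complex.mul_re, Complex.ofReal_im,
      Complex.I_re, Complex.I_im, mul_zero, mul_one, zero_mul, sub_zero, add_zero,
      Complex.add_im, Complex.mul_im, zero_add, zero_mul, min_eq_left hab, max_eq_right hab,
      min_eq_left hcd, max_eq_right hcd]
    exact Hd

lemma rect_cauchy (g : ℂ → ℂ) {a b c d : ℝ} (hab : a < b) (hcd : c < d)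
    (Hc : ContinuousOn g (Icc a b ×ℂ Icc c d))
    (Hd : ∀ z ∈ Ioo a b ×ℂ Ioo c d, DifferentiableAt ℂ g z)
    {w : ℂ} (hw : w ∈ Ioo a b ×ℂ Ioo c d) :
    rectInt (fun z => (z - w)⁻¹ * g z) a b c d = 2 * Real.pi * I * g w := by
  obtain ⟨hwre, hwim⟩ := mem_reProdIm.1 hw
  have hrect_nhds : (Icc a b ×ℂ Icc c d) ∈ 𝓝 w :=
    mem_of_superset ((isOpen_Ioo.reProdIm isOpen_Ioo).mem_nhds hw)
      (fun z hz => by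
        obtain ⟨h1, h2⟩ := mem_reProdIm.1 hz
        exact mem_reProdIm.2 ⟨Ioo_subset_Icc_self h1, Ioo_subset_Icc_self h2⟩)
  have hne_bd : ∀ z ∈ rectBd a b c d, z ≠ w := fun z hz h => hz.2 (h ▸ hw)
  have hgour : rectInt (dslope g w) a b c d = 0 := by
    refine rect_goursat _ hab.le hcd.le {w} (countable_singleton w)
      ((continuousOn_dslope hrect_nhds).2 ⟨Hc, Hd w hw⟩) (fun z hz => ?_)
    have hne : z ≠ w := by
      intro h
      exact (hz.2 : z ∉ ({w} : Set ℂ)) (by simp [h])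
    exact (differentiableAt_dslope_of_ne hne).2 (Hd z hz.1)
  have heq : EqOn (dslope g w) (fun z => (z - w)⁻¹ * g z - (z - w)⁻¹ * g w)
      (rectBd a b c d) := by
    intro z hz
    have hne : z ≠ w := hne_bd z hz
    have hzw : z - w ≠ 0 := sub_ne_zero.2 hne
    rw [dslope_of_ne g hne, slope_def_field]
    field_simp
  have hC1 : ContinuousOn (fun z => (z - w)⁻¹ * g z) (rectBd a b c d) := by
    refine ContinuousOn.mul (ContinuousOn.inv₀ (by fun_prop) ?_) (Hc.mono diff_subset)
    exact fun z hz => sub_ne_zero.2 (hne_bd z hz)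
  have hC2 : ContinuousOn (fun z => (z - w)⁻¹ * g w) (rectBd a b c d) := by
    refine ContinuousOn.mul (ContinuousOn.inv₀ (by fun_prop) ?_) continuousOn_const
    exact fun z hz => sub_ne_zero.2 (hne_bd z hz)
  have key : rectInt (fun z => (z - w)⁻¹ * g z) a b c d
      - rectInt (fun z => (z - w)⁻¹ * g w) a b c d = 0 := by
    rw [← rectInt_sub hab.le hcd.le hC1 hC2, ← rectInt_congr hab.le hcd.le heq, hgour]
  have hwind : rectInt (fun z => (z - w)⁻¹ * g w) a b c d = 2 * Real.pi * I * g w := by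
    rw [rectInt_mul_const, rect_winding a b c d w hwre.1 hwre.2 hwim.1 hwim.2]
  rw [sub_eq_zero] at key
  rw [key, hwind]

lemma cauchy_edge_diff {γ g : ℝ → ℂ} {a b : ℝ} (hγ : Continuous γ)
    (hg : ContinuousOn g (uIcc a b)) {w₀ : ℂ} (hver : ∀ t ∈ uIcc a b, γ t ≠ w₀) :
    DifferentiableAt ℂ (fun w => ∫ t in a..b, g t / (γ t - w)) w₀ := by
  -- minimum distance of the curve to `w₀`
  obtain ⟨t₀, ht₀K, ht₀min⟩ := isCompact_uIcc.exists_isMinOn nonempty_uIcc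
    ((hγ.continuousOn.sub continuousOn_const).norm)
  set δ : ℝ := ‖γ t₀ - w₀‖ with hδdef
  have hδpos : 0 < δ := norm_pos_iff.2 (sub_ne_zero.2 (hver t₀ ht₀K))
  have hδle : ∀ t ∈ uIcc a b, δ ≤ ‖γ t - w₀‖ := fun t ht => ht₀min ht
  have hdist : ∀ t ∈ uIcc a b, ∀ w ∈ ball w₀ (δ / 2), δ / 2 ≤ ‖γ t - w‖ := by
    intro t ht w hw
    have h1 : ‖γ t - w₀‖ - ‖w - w₀‖ ≤ ‖γ t - w‖ := by
      have := norm_sub_norm_le (γ t - w₀) (w - w₀)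
      simpa [sub_sub_sub_cancel_right] using this
    have h2 : ‖w - w₀‖ < δ / 2 := by simpa [dist_eq_norm] using hw
    linarith [hδle t ht]
  obtain ⟨C, hC⟩ := isCompact_uIcc.exists_bound_of_continuousOn hg
  have hne : ∀ t ∈ uIcc a b, ∀ w ∈ ball w₀ (δ / 2), γ t - w ≠ 0 := by
    intro t ht w hw h
    have := hdist t ht w hw
    rw [h] at this
    simp at this
    linarith
  have main := intervalIntegral.hasDerivAt_integral_of_dominated_loc_of_deriv_le
    (𝕜 := ℂ) (μ := volume) (F := fun w t => g t / (γ t - w))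
    (F' := fun w t => g t / (γ t - w) ^ 2) (x₀ := w₀)
    (bound := fun _ => C / (δ / 2) ^ 2) (a := a) (b := b) (s := ball w₀ (δ / 2))
    (ball_mem_nhds w₀ (half_pos hδpos)) ?meas ?int ?meas' ?bnd ?bint ?diff
  · exact main.2.differentiableAt
  case meas =>
    filter_upwards [ball_mem_nhds w₀ (half_pos hδpos)] with w hw
    have hcont : ContinuousOn (fun t => g t / (γ t - w)) (uIcc a b) :=
      hg.div (hγ.continuousOn.sub continuousOn_const) (fun t ht => hne t ht w hw)
    exact (hcont.aestronglyMeasurable measurableSet_uIcc).mono_measure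
      (Measure.restrict_mono uIoc_subset_uIcc le_rfl)
  case int =>
    have hw₀ : w₀ ∈ ball w₀ (δ / 2) := mem_ball_self (half_pos hδpos)
    exact (hg.div (hγ.continuousOn.sub continuousOn_const)
      (fun t ht => hne t ht w₀ hw₀)).intervalIntegrable
  case meas' =>
    have hw₀ : w₀ ∈ ball w₀ (δ / 2) := mem_ball_self (half_pos hδpos)
    have hcont : ContinuousOn (fun t => g t / (γ t - w₀) ^ 2) (uIcc a b) :=
      hg.div ((hγ.continuousOn.sub continuousOn_const).pow 2)
        (fun t ht => pow_ne_zero 2 (hne t ht w₀ hw₀))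
    exact (hcont.aestronglyMeasurable measurableSet_uIcc).mono_measure
      (Measure.restrict_mono uIoc_subset_uIcc le_rfl)
  case bnd =>
    refine ae_of_all _ (fun t ht w hw => ?_)
    have htK : t ∈ uIcc a b := uIoc_subset_uIcc ht
    have h1 : δ / 2 ≤ ‖γ t - w‖ := hdist t htK w hw
    have h2 : ‖g t‖ ≤ C := hC t htK
    rw [norm_div, norm_pow]
    have hC0 : 0 ≤ C := le_trans (norm_nonneg (g t)) h2
    exact div_le_div₀ hC0 h2 (pow_pos (half_pos hδpos) 2)
      (pow_le_pow_left₀ (half_pos hδpos).le h1 2)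
  case bint => exact intervalIntegrable_const
  case diff =>
    refine ae_of_all _ (fun t ht w hw => ?_)
    have htK : t ∈ uIcc a b := uIoc_subset_uIcc ht
    have h1 : HasDerivAt (fun w : ℂ => γ t - w) (-1) w := (hasDerivAt_id w).const_sub (γ t)
    have h2 : HasDerivAt (fun w : ℂ => (γ t - w)⁻¹) (-(-1) / (γ t - w) ^ 2) w :=
      h1.inv (hne t htK w hw)
    have h3 := h2.const_mul (g t)
    have : g t * (-(-1) / (γ t - w) ^ 2) = g t / (γ t - w) ^ 2 := by ring
    rw [this] at h3
    simpa [div_eq_mul_inv] using h3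


lemma hasDerivAt_conj_conj {g : ℂ → ℂ} {d u : ℂ}
    (h : HasDerivAt g d ((starRingEnd ℂ) u)) :
    HasDerivAt (fun z => (starRingEnd ℂ) (g ((starRingEnd ℂ) z))) ((starRingEnd ℂ) d) u := by
  rw [hasDerivAt_iff_tendsto_slope] at h ⊢
  have hconj_pt : Tendsto (fun z : ℂ => (starRingEnd ℂ) z) (𝓝[≠] u) (𝓝[≠] ((starRingEnd ℂ) u)) := by
    apply tendsto_nhdsWithin_of_tendsto_nhds_of_eventually_within
    · exact (Complex.continuous_conj.tendsto u).mono_left nhdsWithin_le_nhds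
    · filter_upwards [self_mem_nhdsWithin] with z hz
      simp only [mem_compl_iff, mem_singleton_iff] at hz ⊢
      exact fun hc => hz ((starRingEnd ℂ).injective hc)
  have hcomp : Tendsto (fun z => (starRingEnd ℂ) (slope g ((starRingEnd ℂ) u) ((starRingEnd ℂ) z)))
      (𝓝[≠] u) (𝓝 ((starRingEnd ℂ) d)) :=
    (Complex.continuous_conj.tendsto d).comp (h.comp hconj_pt)
  refine hcomp.congr (fun z => ?_)
  simp only [slope_def_field]
  rw [map_div₀, map_sub, map_sub]
  simp

lemma hasDerivAt_im_comp {e : ℝ → ℂ} {e' : ℂ} {x : ℝ} (h : HasDerivAt e e' x) :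
    HasDerivAt (fun t => (e t).im) e'.im x := by
  have := (Complex.imCLM.hasFDerivAt (x := e x)).comp x h.hasFDerivAt
  have h2 := this.hasDerivAt
  simpa using! h2

lemma deriv_re_nonneg_of_im_nonneg {Φ : ℂ → ℂ} {x : ℝ} {d : ℂ}
    (hΦ : HasDerivAt Φ d (x : ℂ)) (h0 : (Φ (x : ℂ)).im = 0)
    (hpos : ∀ᶠ (v : ℝ) in 𝓝[>] 0, 0 ≤ (Φ ((x : ℂ) + (v : ℂ) * I)).im) : 0 ≤ d.re := by
  set h : ℝ → ℂ := fun v : ℝ => (x : ℂ) + (v : ℂ) * I with hh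
  have hh0 : h 0 = (x : ℂ) := by simp [hh]
  have hinner : HasDerivAt h I 0 := by
    have h1 : HasDerivAt (fun z : ℂ => (x : ℂ) + z * I) I ((0 : ℝ) : ℂ) := by
      simpa using ((hasDerivAt_id ((0:ℝ) : ℂ)).mul_const I).const_add (x : ℂ)
    exact h1.comp_ofReal
  have hΦ' : HasDerivAt Φ d (h 0) := by rwa [hh0]
  have he : HasDerivAt (fun v => Φ (h v)) (I • d) 0 := hΦ'.scomp 0 hinner
  have him : HasDerivAt (fun v => (Φ (h v)).im) ((I • d).im) 0 := hasDerivAt_im_comp he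
  have hval : (I • d).im = d.re := by simp [Complex.mul_im]
  rw [hval] at him
  have hw := him.hasDerivWithinAt (s := Ioi (0 : ℝ))
  rw [hasDerivWithinAt_iff_tendsto_slope] at hw
  have hset : Ioi (0 : ℝ) \ {0} = Ioi 0 := diff_singleton_eq_self (by simp)
  rw [hset] at hw
  refine ge_of_tendsto hw ?_
  filter_upwards [hpos, self_mem_nhdsWithin] with v hv hv'
  have hv0 : 0 < v := hv'
  have : slope (fun v => (Φ (h v)).im) 0 v = (Φ (h v)).im / v := by
    rw [slope_def_field]
    rw [hh0, h0]
    ring_nf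
  rw [this]
  exact div_nonneg hv hv0.le
theorem key (f : ℝ → ℝ) (hfc : ∀ t : ℝ, 0 < t → ContinuousAt f t)
    (F : ℂ → ℂ) (hFd : DifferentiableOn ℂ F UHP)
    (hFim : ∀ z ∈ UHP, 0 ≤ (F z).im)
    (hFlim : ∀ t : ℝ, 0 < t → Tendsto F (𝓝[UHP] (t : ℂ)) (𝓝 (f t : ℂ))) :
    f 1 ≤ f 2 := by
  set p : ℝ := 1/2 with hp
  set q : ℝ := 3 with hq
  set M : ℝ := 1 with hM
  have hpq : p < q := by norm_num [hp, hq]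
  have hM0 : (0:ℝ) < M := by norm_num [hM]
  have hp0 : (0:ℝ) < p := by norm_num [hp]
  -- the boundary extension G of F
  set G : ℂ → ℂ := fun z => if 0 < z.im then F z else (f z.re : ℂ) with hGdef
  have hGF : ∀ z, 0 < z.im → G z = F z := fun z hz => if_pos hz
  have hGx : ∀ x : ℝ, G (x : ℂ) = (f x : ℂ) := by
    intro x
    simp only [hGdef, Complex.ofReal_im, lt_irrefl, if_false, Complex.ofReal_re]
  have hGdiff : ∀ z : ℂ, 0 < z.im → DifferentiableAt ℂ G z := by
    intro z hz
    have h1 : DifferentiableAt ℂ F z :=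
      (hFd z hz).differentiableAt (isOpen_UHP.mem_nhds hz)
    refine h1.congr_of_eventuallyEq ?_
    filter_upwards [isOpen_UHP.mem_nhds hz] with w hw
    exact hGF w hw
  -- continuity of G on the closed quadrant piece
  have hGcont : ContinuousOn G {z : ℂ | 0 < z.re ∧ 0 ≤ z.im} := by
    intro z₀ hz₀
    rcases eq_or_lt_of_le hz₀.2 with h0 | hposim
    · -- boundary point
      have ht : 0 < z₀.re := hz₀.1
      have hz₀t : z₀ = ((z₀.re : ℝ) : ℂ) := Complex.ext rfl (by simp [← h0])
      have hGz₀ : G z₀ = (f z₀.re : ℂ) := by rw [hz₀t, hGx]; rw [← hz₀t]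
      rw [ContinuousWithinAt, hGz₀]
      have hsub : {z : ℂ | 0 < z.re ∧ 0 ≤ z.im} ⊆ UHP ∪ {z : ℂ | z.im = 0 ∧ 0 < z.re} := by
        intro z hz
        rcases eq_or_lt_of_le hz.2 with h | h
        · exact Or.inr ⟨h.symm, hz.1⟩
        · exact Or.inl h
      refine Tendsto.mono_left ?_ (nhdsWithin_mono z₀ hsub)
      rw [nhdsWithin_union, tendsto_sup]
      constructor
      · have hlim := hFlim z₀.re ht
        rw [← hz₀t] at hlim
        refine Tendsto.congr' ?_ hlim
        filter_upwards [self_mem_nhdsWithin] with z hz using (hGF z hz).symm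
      · have hcont : Tendsto (fun z : ℂ => (f z.re : ℂ)) (𝓝 z₀) (𝓝 (f z₀.re : ℂ)) :=
          Complex.continuous_ofReal.continuousAt.tendsto.comp
            ((hfc z₀.re ht).tendsto.comp (Complex.continuous_re.tendsto z₀))
        refine Tendsto.congr' ?_ (hcont.mono_left nhdsWithin_le_nhds)
        filter_upwards [self_mem_nhdsWithin] with z hz
        rw [hGdef]
        simp only
        rw [if_neg (by rw [hz.1]; exact lt_irrefl 0)]
    · exact (hGdiff z₀ hposim).continuousAt.continuousWithinAt
  -- the reflected function
  set Gs : ℂ → ℂ := fun z => (starRingEnd ℂ) (G ((starRingEnd ℂ) z)) with hGsdef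
  have hGsx : ∀ x : ℝ, Gs (x : ℂ) = (f x : ℂ) := by
    intro x
    simp only [hGsdef, Complex.conj_ofReal, hGx]
  have hGsdiff : ∀ z : ℂ, z.im < 0 → DifferentiableAt ℂ Gs z := by
    intro z hz
    have h1 : 0 < ((starRingEnd ℂ) z).im := by simpa using hz
    exact (hasDerivAt_conj_conj (hGdiff _ h1).hasDerivAt).differentiableAt
  have hGscont : ContinuousOn Gs {z : ℂ | 0 < z.re ∧ z.im ≤ 0} := by
    have hmaps : MapsTo (starRingEnd ℂ) {z : ℂ | 0 < z.re ∧ z.im ≤ 0}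
        {z : ℂ | 0 < z.re ∧ 0 ≤ z.im} := by
      intro z hz
      simp only [mem_setOf_eq] at hz ⊢
      constructor
      · simpa using hz.1
      · simp only [Complex.conj_im]
        linarith [hz.2]
    exact Complex.continuous_conj.comp_continuousOn
      (hGcont.comp Complex.continuous_conj.continuousOn hmaps)
  -- restrictions to the rectangles
  have hrect_up : (Icc p q ×ℂ Icc 0 M) ⊆ {z : ℂ | 0 < z.re ∧ 0 ≤ z.im} := by
    intro z hz
    obtain ⟨h1, h2⟩ := mem_reProdIm.1 hz
    exact ⟨lt_of_lt_of_le hp0 h1.1, h2.1⟩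
  have hrect_dn : (Icc p q ×ℂ Icc (-M) 0) ⊆ {z : ℂ | 0 < z.re ∧ z.im ≤ 0} := by
    intro z hz
    obtain ⟨h1, h2⟩ := mem_reProdIm.1 hz
    exact ⟨lt_of_lt_of_le hp0 h1.1, h2.2⟩
  -- the holomorphic extension Φ
  set Φ : ℂ → ℂ := fun w => (2 * Real.pi * I)⁻¹ *
      (-(∫ x in p..q, G ((x : ℂ) + (M : ℂ) * I) / (((x : ℂ) + (M : ℂ) * I) - w))
        + I • (∫ y in (0:ℝ)..M, G ((q : ℂ) + (y : ℂ) * I) / (((q : ℂ) + (y : ℂ) * I) - w))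
        - I • (∫ y in (0:ℝ)..M, G ((p : ℂ) + (y : ℂ) * I) / (((p : ℂ) + (y : ℂ) * I) - w))
        + (∫ x in p..q, Gs ((x : ℂ) + (-M : ℂ) * I) / (((x : ℂ) + (-M : ℂ) * I) - w))
        + I • (∫ y in (-M)..(0:ℝ), Gs ((q : ℂ) + (y : ℂ) * I) / (((q : ℂ) + (y : ℂ) * I) - w))
        - I • (∫ y in (-M)..(0:ℝ), Gs ((p : ℂ) + (y : ℂ) * I) / (((p : ℂ) + (y : ℂ) * I) - w)))
    with hΦdef
  have hΦdiff : ∀ w ∈ Ioo p q ×ℂ Ioo (-M) M, DifferentiableAt ℂ Φ w := by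
    intro w hw
    obtain ⟨hwre, hwim⟩ := mem_reProdIm.1 hw
    have e1 : DifferentiableAt ℂ
        (fun w => ∫ x in p..q, G ((x:ℂ) + (M:ℂ)*I) / (((x:ℂ) + (M:ℂ)*I) - w)) w := by
      apply cauchy_edge_diff (Complex.continuous_ofReal.add continuous_const)
      · apply (hGcont.mono hrect_up).comp
          (Continuous.continuousOn (Complex.continuous_ofReal.add continuous_const))
        intro t ht
        rw [uIcc_of_le hpq.le] at ht
        exact mem_reProdIm.2 ⟨by simpa using ht, by simp [mem_Icc, hM0.le]⟩
      · intro t ht heq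
        have him : ((t:ℂ) + (M:ℂ)*I).im = M := by simp
        rw [show ((t:ℂ) + (M:ℂ)*I) = w from heq] at him
        have := hwim.2
        linarith
    have e2 : DifferentiableAt ℂ
        (fun w => ∫ y in (0:ℝ)..M, G ((q:ℂ) + (y:ℂ)*I) / (((q:ℂ) + (y:ℂ)*I) - w)) w := by
      apply cauchy_edge_diff
        (continuous_const.add (Complex.continuous_ofReal.mul continuous_const))
      · apply (hGcont.mono hrect_up).comp (Continuous.continuousOn
          (continuous_const.add (Complex.continuous_ofReal.mul continuous_const)))
        intro t ht
        rw [uIcc_of_le hM0.le] at ht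
        exact mem_reProdIm.2 ⟨by simp [mem_Icc, hpq.le], by simpa using ht⟩
      · intro t ht heq
        have hre : ((q:ℂ) + (t:ℂ)*I).re = q := by simp
        rw [show ((q:ℂ) + (t:ℂ)*I) = w from heq] at hre
        have := hwre.2
        linarith
    have e3 : DifferentiableAt ℂ
        (fun w => ∫ y in (0:ℝ)..M, G ((p:ℂ) + (y:ℂ)*I) / (((p:ℂ) + (y:ℂ)*I) - w)) w := by
      apply cauchy_edge_diff
        (continuous_const.add (Complex.continuous_ofReal.mul continuous_const))
      · apply (hGcont.mono hrect_up).comp (Continuous.continuousOn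
          (continuous_const.add (Complex.continuous_ofReal.mul continuous_const)))
        intro t ht
        rw [uIcc_of_le hM0.le] at ht
        exact mem_reProdIm.2 ⟨by simp [mem_Icc, hpq.le], by simpa using ht⟩
      · intro t ht heq
        have hre : ((p:ℂ) + (t:ℂ)*I).re = p := by simp
        rw [show ((p:ℂ) + (t:ℂ)*I) = w from heq] at hre
        have := hwre.1
        linarith
    have e4 : DifferentiableAt ℂ
        (fun w => ∫ x in p..q, Gs ((x:ℂ) + (-M:ℂ)*I) / (((x:ℂ) + (-M:ℂ)*I) - w)) w := by
      apply cauchy_edge_diff (Complex.continuous_ofReal.add continuous_const)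
      · apply (hGscont.mono hrect_dn).comp
          (Continuous.continuousOn (Complex.continuous_ofReal.add continuous_const))
        intro t ht
        rw [uIcc_of_le hpq.le] at ht
        exact mem_reProdIm.2 ⟨by simpa using ht, by simp [mem_Icc]; linarith⟩
      · intro t ht heq
        have him : ((t:ℂ) + (-M:ℂ)*I).im = -M := by simp
        rw [show ((t:ℂ) + (-M:ℂ)*I) = w from heq] at him
        have := hwim.1
        linarith
    have e5 : DifferentiableAt ℂ
        (fun w => ∫ y in (-M)..(0:ℝ), Gs ((q:ℂ) + (y:ℂ)*I) / (((q:ℂ) + (y:ℂ)*I) - w)) w := by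
      apply cauchy_edge_diff
        (continuous_const.add (Complex.continuous_ofReal.mul continuous_const))
      · apply (hGscont.mono hrect_dn).comp (Continuous.continuousOn
          (continuous_const.add (Complex.continuous_ofReal.mul continuous_const)))
        intro t ht
        rw [uIcc_of_le (by linarith : -M ≤ (0:ℝ))] at ht
        exact mem_reProdIm.2 ⟨by simp [mem_Icc, hpq.le], by simpa using ht⟩
      · intro t ht heq
        have hre : ((q:ℂ) + (t:ℂ)*I).re = q := by simp
        rw [show ((q:ℂ) + (t:ℂ)*I) = w from heq] at hre
        have := hwre.2
        linarith
    have e6 : DifferentiableAt ℂ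
        (fun w => ∫ y in (-M)..(0:ℝ), Gs ((p:ℂ) + (y:ℂ)*I) / (((p:ℂ) + (y:ℂ)*I) - w)) w := by
      apply cauchy_edge_diff
        (continuous_const.add (Complex.continuous_ofReal.mul continuous_const))
      · apply (hGscont.mono hrect_dn).comp (Continuous.continuousOn
          (continuous_const.add (Complex.continuous_ofReal.mul continuous_const)))
        intro t ht
        rw [uIcc_of_le (by linarith : -M ≤ (0:ℝ))] at ht
        exact mem_reProdIm.2 ⟨by simp [mem_Icc, hpq.le], by simpa using ht⟩
      · intro t ht heq
        have hre : ((p:ℂ) + (t:ℂ)*I).re = p := by simp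
        rw [show ((p:ℂ) + (t:ℂ)*I) = w from heq] at hre
        have := hwre.1
        linarith
    rw [hΦdef]
    exact DifferentiableAt.const_mul
      (((((e1.neg.add (e2.const_smul I)).sub (e3.const_smul I)).add e4).add
        (e5.const_smul I)).sub (e6.const_smul I)) _
  have h2πne : (2 * (Real.pi : ℂ) * I) ≠ 0 :=
    mul_ne_zero (mul_ne_zero two_ne_zero (Complex.ofReal_ne_zero.2 Real.pi_ne_zero)) I_ne_zero
  have hΦeq : ∀ w ∈ Ioo p q ×ℂ Ioo 0 M, Φ w = G w := by
    intro w hw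
    obtain ⟨hwre, hwim⟩ := mem_reProdIm.1 hw
    have e1 : rectInt (fun z => (z - w)⁻¹ * G z) p q 0 M = 2 * Real.pi * I * G w := by
      refine rect_cauchy G hpq hM0 (hGcont.mono hrect_up) (fun z hz => ?_) hw
      exact hGdiff z (mem_reProdIm.1 hz).2.1
    have e2 : rectInt (fun z => (z - w)⁻¹ * Gs z) p q (-M) 0 = 0 := by
      apply rect_goursat _ hpq.le (by linarith) ∅ countable_empty
      · apply ContinuousOn.mul
        · apply ContinuousOn.inv₀ (by fun_prop)
          intro z hz
          have hzim : z.im ≤ 0 := (mem_reProdIm.1 hz).2.2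
          intro h0
          rw [sub_eq_zero] at h0
          rw [h0] at hzim
          linarith [hwim.1]
        · exact hGscont.mono hrect_dn
      · intro z hz
        have hzim : z.im < 0 := (mem_reProdIm.1 hz.1).2.2
        have hz_ne : z - w ≠ 0 := by
          intro h0
          rw [sub_eq_zero] at h0
          rw [h0] at hzim
          linarith [hwim.1]
        exact ((differentiableAt_id.sub (differentiableAt_const w)).inv hz_ne).mul
          (hGsdiff z hzim)
    unfold rectInt at e1 e2
    simp only [Complex.ofReal_zero, zero_mul, add_zero, Complex.ofReal_neg, hGx, hGsx,
      smul_eq_mul] at e1 e2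
    simp only [hΦdef, div_eq_inv_mul, smul_eq_mul]
    rw [inv_mul_eq_iff_eq_mul₀ h2πne]
    linear_combination e1 + e2
  have hΦbd : ∀ x : ℝ, x ∈ Ioo p q → Φ (x : ℂ) = (f x : ℂ) := by
    intro x hx
    have hmem : (x : ℂ) ∈ Ioo p q ×ℂ Ioo (-M) M :=
      mem_reProdIm.2 ⟨by simpa using hx, by simp; linarith⟩
    have hcontΦ : ContinuousAt Φ (x : ℂ) := (hΦdiff _ hmem).continuousAt
    have hx0 : 0 < x := lt_trans hp0 hx.1
    have hpath : Tendsto (fun v : ℝ => ((x : ℂ) + (v : ℂ) * I)) (𝓝[>] (0:ℝ))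
        (𝓝[UHP] (x : ℂ)) := by
      apply tendsto_nhdsWithin_of_tendsto_nhds_of_eventually_within
      · have h1 : Tendsto (fun v : ℝ => ((x : ℂ) + (v : ℂ) * I)) (𝓝 0)
            (𝓝 ((x : ℂ) + ((0:ℝ) : ℂ) * I)) :=
          Continuous.tendsto
            (continuous_const.add (Complex.continuous_ofReal.mul continuous_const)) 0
        simp only [Complex.ofReal_zero, zero_mul, add_zero] at h1
        exact h1.mono_left nhdsWithin_le_nhds
      · filter_upwards [self_mem_nhdsWithin] with v hv
        show (0:ℝ) < _
        simpa using hv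
    have t1 : Tendsto (fun v : ℝ => Φ ((x : ℂ) + (v : ℂ) * I)) (𝓝[>] (0:ℝ)) (𝓝 (Φ (x : ℂ))) :=
      hcontΦ.tendsto.comp (hpath.mono_right nhdsWithin_le_nhds)
    have t2 : Tendsto (fun v : ℝ => Φ ((x : ℂ) + (v : ℂ) * I)) (𝓝[>] (0:ℝ))
        (𝓝 ((f x : ℂ))) := by
      have hF := (hFlim x hx0).comp hpath
      refine Tendsto.congr' ?_ hF
      filter_upwards [Ioo_mem_nhdsGT_of_mem (left_mem_Ico.2 hM0)] with v hv
      have hvpos : 0 < v := hv.1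
      have hmem2 : ((x : ℂ) + (v : ℂ) * I) ∈ Ioo p q ×ℂ Ioo 0 M :=
        mem_reProdIm.2 ⟨by simpa using hx, by simpa using hv⟩
      have him : (0:ℝ) < ((x : ℂ) + (v : ℂ) * I).im := by simpa using hvpos
      calc F ((x : ℂ) + (v : ℂ) * I) = G ((x : ℂ) + (v : ℂ) * I) := (hGF _ him).symm
        _ = Φ ((x : ℂ) + (v : ℂ) * I) := (hΦeq _ hmem2).symm
    exact tendsto_nhds_unique t1 t2
  -- endgame: monotonicity
  have h12 : Icc (1:ℝ) 2 ⊆ Ioo p q := by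
    intro t ht
    constructor
    · rw [hp]; linarith [ht.1]
    · rw [hq]; linarith [ht.2]
  set g : ℝ → ℝ := fun t => (Φ (t : ℂ)).re with hgdef
  have hgd : ∀ x : ℝ, x ∈ Ioo p q →
      HasDerivAt g (deriv Φ (x : ℂ)).re x ∧ 0 ≤ (deriv Φ (x : ℂ)).re := by
    intro x hx
    have hmem : (x : ℂ) ∈ Ioo p q ×ℂ Ioo (-M) M :=
      mem_reProdIm.2 ⟨by simpa using hx, by simp; linarith⟩
    have hΦx : HasDerivAt Φ (deriv Φ (x : ℂ)) (x : ℂ) := (hΦdiff _ hmem).hasDerivAt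
    refine ⟨hΦx.real_of_complex, ?_⟩
    apply deriv_re_nonneg_of_im_nonneg hΦx
    · rw [hΦbd x hx]
      simp
    · filter_upwards [Ioo_mem_nhdsGT_of_mem (left_mem_Ico.2 hM0)] with v hv
      have hvpos : 0 < v := hv.1
      have hmem2 : ((x : ℂ) + (v : ℂ) * I) ∈ Ioo p q ×ℂ Ioo 0 M :=
        mem_reProdIm.2 ⟨by simpa using hx, by simpa using hv⟩
      have him : (0:ℝ) < ((x : ℂ) + (v : ℂ) * I).im := by simpa using hvpos
      rw [hΦeq _ hmem2, hGF _ him]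
      exact hFim _ him
  have hmono : MonotoneOn g (Icc 1 2) := by
    apply monotoneOn_of_deriv_nonneg (convex_Icc 1 2)
    · intro x hx
      exact ((hgd x (h12 hx)).1.continuousAt).continuousWithinAt
    · rw [interior_Icc]
      intro x hx
      exact ((hgd x (h12 (Ioo_subset_Icc_self hx))).1.differentiableAt).differentiableWithinAt
    · rw [interior_Icc]
      intro x hx
      have h := hgd x (h12 (Ioo_subset_Icc_self hx))
      rw [h.1.deriv]
      exact h.2
  have hg1 : g 1 = f 1 := by
    have := hΦbd 1 (h12 (left_mem_Icc.2 one_le_two))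
    simp only [hgdef]
    rw [this]
    simp
  have hg2 : g 2 = f 2 := by
    have := hΦbd 2 (h12 (right_mem_Icc.2 one_le_two))
    simp only [hgdef]
    rw [this]
    simp
  calc f 1 = g 1 := hg1.symm
    _ ≤ g 2 := hmono (left_mem_Icc.2 one_le_two) (right_mem_Icc.2 one_le_two) one_le_two
    _ = f 2 := hg2


theorem stmt19 (a b : ℝ) (hne : a ≠ b) (hb : 0 < b) (ha : a ≤ 0) :
    ¬ OperatorMonotoneOn (fun t => (t ^ a + 1) / (t ^ b + 1)) := by
  rintro ⟨F, hFd, hFim, hFlim⟩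
  set f : ℝ → ℝ := fun t => (t ^ a + 1) / (t ^ b + 1) with hfdef
  have hfc : ∀ t : ℝ, 0 < t → ContinuousAt f t := by
    intro t ht
    have h1 : ContinuousAt (fun t : ℝ => t ^ a) t :=
      Real.continuousAt_rpow_const t a (Or.inl (ne_of_gt ht))
    have h2 : ContinuousAt (fun t : ℝ => t ^ b) t :=
      Real.continuousAt_rpow_const t b (Or.inl (ne_of_gt ht))
    have hden : t ^ b + 1 ≠ 0 := by
      have := Real.rpow_pos_of_pos ht b
      linarith
    exact (h1.add continuousAt_const).div (h2.add continuousAt_const) hden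
  have hle : f 1 ≤ f 2 := key f hfc F hFd hFim hFlim
  have hf1 : f 1 = 1 := by
    simp [hfdef, Real.one_rpow]
  have hf2 : f 2 < 1 := by
    rw [hfdef]
    simp only
    rw [div_lt_one]
    · have ha2 : (2:ℝ) ^ a ≤ 1 := Real.rpow_le_one_of_one_le_of_nonpos one_le_two ha
      have hb2 : (1:ℝ) < (2:ℝ) ^ b := Real.one_lt_rpow one_lt_two hb
      linarith
    · have := Real.rpow_pos_of_pos (by norm_num : (0:ℝ) < 2) b
      linarith
  rw [hf1] at hle
  linarith

end
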